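/- For every odd integer s and every positive integer l, the third derivative of the Fibonacci polynomial satisfies F'''_{3·2^l}(s) ≡ 0, F'''_{3·2^l+1}(s) ≡ 0, and F'''_{3·2^l+2}(s) ≡ 2^l (mod 2^{l+1}). -/
import Mathlib


open Polynomial

noncomputable def fibPoly : ℕ → Polynomial ℤ
  | 0 => 0
  | 1 => 1
  | n + 2 => X * fibPoly (n + 1) + fibPoly n

private lemma fibPoly_rec' (n : ℕ) : fibPoly (n + 2) = X * fibPoly (n + 1) + fibPoly n := rfl

private lemma fibPoly_add' (m : ℕ) : ∀ n : ℕ,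
    fibPoly (m + n + 1) = fibPoly (m + 1) * fibPoly (n + 1) + fibPoly m * fibPoly n := by
  intro n
  induction n using Nat.twoStepInduction with
  | zero =>
      show fibPoly (m + 1) = _
      rw [show fibPoly 1 = 1 from rfl, show fibPoly 0 = 0 from rfl]; ring
  | one =>
      show fibPoly (m + 2) = _
      rw [fibPoly_rec' m, show fibPoly 2 = X * fibPoly 1 + fibPoly 0 from rfl,
        show fibPoly 1 = 1 from rfl, show fibPoly 0 = 0 from rfl]
      ring
  | more n ih1 ih2 =>
      have e1 : m + (n + 2) + 1 = (m + n + 1) + 2 := by ring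
      have e2 : m + n + 1 + 1 = m + (n + 1) + 1 := by ring
      rw [e1, fibPoly_rec', e2, ih2, ih1, show n+1+1 = n+2 from rfl,
        show n+2+1 = (n+1)+2 from rfl, fibPoly_rec' (n+1), fibPoly_rec' n]
      ring

private lemma fibPoly_two_mul' (n : ℕ) :
    fibPoly (2 * n) = fibPoly n * (fibPoly (n + 1) + fibPoly (n + 1) - X * fibPoly n) := by
  cases n with
  | zero => rw [show 2*0 = 0 from rfl, show fibPoly 0 = 0 from rfl]; ring
  | succ k =>
      have h := fibPoly_add' k (k + 1)
      rw [show 2 * (k+1) = k + (k+1) + 1 by ring, h, fibPoly_rec' k]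
      ring

private lemma fibPoly_two_mul_add_one' (n : ℕ) :
    fibPoly (2 * n + 1) = fibPoly (n + 1) * fibPoly (n + 1) + fibPoly n * fibPoly n := by
  rw [show 2*n+1 = n + n + 1 by ring, fibPoly_add' n n]

/-- The inductive invariant: derivative data of `fibPoly n` and `fibPoly (n+1)` at `s`,
modulo suitable multiples of `m` (think `n = 3·2^l`, `m = 2^(l-1)`). -/
private def FibInv (s : ℤ) (n : ℕ) (m : ℤ) : Prop :=
  (fibPoly n).eval s ≡ 8*m [ZMOD 16*m] ∧
  (derivative (fibPoly n)).eval s ≡ 4*m [ZMOD 16*m] ∧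
  (derivative (derivative (fibPoly n))).eval s ≡ 4*m [ZMOD 8*m] ∧
  (derivative (derivative (derivative (fibPoly n)))).eval s ≡ 12*m [ZMOD 24*m] ∧
  (fibPoly (n+1)).eval s ≡ 1 + 4*m [ZMOD 8*m] ∧
  (derivative (fibPoly (n+1))).eval s ≡ 2*m [ZMOD 4*m] ∧
  (derivative (derivative (fibPoly (n+1)))).eval s ≡ 2*m [ZMOD 4*m] ∧
  (derivative (derivative (derivative (fibPoly (n+1))))).eval s ≡ 0 [ZMOD 12*m]

private lemma fibInv_step (t m : ℤ) (n : ℕ) (h : FibInv (2*t+1) n m) :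
    FibInv (2*t+1) (2*n) (2*m) := by
  obtain ⟨h1, h2, h3, h4, h5, h6, h7, h8⟩ := h
  obtain ⟨c0, hc0⟩ := Int.ModEq.dvd h1
  obtain ⟨c1, hc1⟩ := Int.ModEq.dvd h2
  obtain ⟨c2, hc2⟩ := Int.ModEq.dvd h3
  obtain ⟨c3, hc3⟩ := Int.ModEq.dvd h4
  obtain ⟨d0, hd0⟩ := Int.ModEq.dvd h5
  obtain ⟨d1, hd1⟩ := Int.ModEq.dvd h6
  obtain ⟨d2, hd2⟩ := Int.ModEq.dvd h7
  obtain ⟨d3, hd3⟩ := Int.ModEq.dvd h8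
  have hA0 : (fibPoly n).eval (2*t+1) = 8*m - 16*m*c0 := by linarith
  have hA1 : (derivative (fibPoly n)).eval (2*t+1) = 4*m - 16*m*c1 := by linarith
  have hA2 : (derivative (derivative (fibPoly n))).eval (2*t+1) = 4*m - 8*m*c2 := by linarith
  have hA3 : (derivative (derivative (derivative (fibPoly n)))).eval (2*t+1)
      = 12*m - 24*m*c3 := by linarith
  have hB0 : (fibPoly (n+1)).eval (2*t+1) = 1 + 4*m - 8*m*d0 := by linarith
  have hB1 : (derivative (fibPoly (n+1))).eval (2*t+1) = 2*m - 4*m*d1 := by linarith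
  have hB2 : (derivative (derivative (fibPoly (n+1)))).eval (2*t+1) = 2*m - 4*m*d2 := by
    linarith
  have hB3 : (derivative (derivative (derivative (fibPoly (n+1))))).eval (2*t+1)
      = -(12*m*d3) := by linarith
  refine ⟨?_, ?_, ?_, ?_, ?_, ?_, ?_, ?_⟩
  · rw [Int.modEq_iff_dvd]
    refine ⟨(c0 + 4*m*d0 + (-4)*m*c0 + (-8)*m*c0*d0 + 8*m*c0*c0 + 4*t*m + (-16)*t*m*c0
      + 16*t*m*c0*c0), ?_⟩
    rw [fibPoly_two_mul' n]
    simp only [derivative_mul, derivative_add, derivative_sub, derivative_X, eval_add,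
      eval_sub, eval_mul, eval_X, eval_one, one_mul, mul_one]
    rw [hA0, hB0]; ring
  · rw [Int.modEq_iff_dvd]
    refine ⟨(c1 + 2*m + 2*m*d1 + 2*m*d0 + (-4)*m*c1 + (-8)*m*c1*d0 + (-10)*m*c0
      + (-4)*m*c0*d1 + 16*m*c0*c1 + 8*m*c0*c0 + 4*t*m + (-16)*t*m*c1 + (-8)*t*m*c0
      + 32*t*m*c0*c1), ?_⟩
    rw [fibPoly_two_mul' n]
    simp only [derivative_mul, derivative_add, derivative_sub, derivative_X, eval_add,
      eval_sub, eval_mul, eval_X, eval_one, one_mul, mul_one]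
    rw [hA0, hA1, hB0, hB1]; ring
  · rw [Int.modEq_iff_dvd]
    refine ⟨(c2 + 8*m + 4*m*d2 + 4*m*d1 + 4*m*d0 + (-4)*m*c2 + (-8)*m*c2*d0 + (-40)*m*c1
      + (-16)*m*c1*d1 + 32*m*c1*c1 + (-20)*m*c0 + (-8)*m*c0*d2 + 16*m*c0*c2 + 64*m*c0*c1
      + 12*t*m + (-16)*t*m*c2 + (-32)*t*m*c1 + 64*t*m*c1*c1 + (-16)*t*m*c0
      + 32*t*m*c0*c2), ?_⟩
    rw [fibPoly_two_mul' n]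
    simp only [derivative_mul, derivative_add, derivative_sub, derivative_X, eval_add,
      eval_sub, eval_mul, eval_X, eval_one, one_mul, mul_one]
    rw [hA0, hA1, hA2, hB0, hB1, hB2]; ring
  · rw [Int.modEq_iff_dvd]
    refine ⟨(c3 + 8*m + 4*m*d3 + 2*m*d2 + 2*m*d1 + 4*m*d0 + (-4)*m*c3 + (-8)*m*c3*d0
      + (-10)*m*c2 + (-4)*m*c2*d1 + (-20)*m*c1 + (-8)*m*c1*d2 + 16*m*c1*c2 + 32*m*c1*c1
      + (-16)*m*c0 + (-8)*m*c0*d3 + 16*m*c0*c3 + 16*m*c0*c2 + 12*t*m + (-16)*t*m*c3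
      + (-8)*t*m*c2 + (-16)*t*m*c1 + 32*t*m*c1*c2 + (-16)*t*m*c0 + 32*t*m*c0*c3), ?_⟩
    rw [fibPoly_two_mul' n]
    simp only [derivative_mul, derivative_add, derivative_sub, derivative_X, eval_add,
      eval_sub, eval_mul, eval_X, eval_one, one_mul, mul_one]
    rw [hA0, hA1, hA2, hA3, hB0, hB1, hB2, hB3]; ring
  · rw [Int.modEq_iff_dvd]
    refine ⟨(d0 + (-5)*m + 4*m*d0 + (-4)*m*d0*d0 + 16*m*c0 + (-16)*m*c0*c0), ?_⟩
    rw [fibPoly_two_mul_add_one' n]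
    simp only [derivative_mul, derivative_add, derivative_sub, derivative_X, eval_add,
      eval_sub, eval_mul, eval_X, eval_one, one_mul, mul_one]
    rw [hA0, hB0]; ring
  · rw [Int.modEq_iff_dvd]
    refine ⟨(d1 + (-10)*m + 4*m*d1 + 4*m*d0 + (-8)*m*d0*d1 + 32*m*c1 + 16*m*c0
      + (-64)*m*c0*c1), ?_⟩
    rw [fibPoly_two_mul_add_one' n]
    simp only [derivative_mul, derivative_add, derivative_sub, derivative_X, eval_add,
      eval_sub, eval_mul, eval_X, eval_one, one_mul, mul_one]
    rw [hA0, hA1, hB0, hB1]; ring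
  · rw [Int.modEq_iff_dvd]
    refine ⟨(d2 + (-15)*m + 4*m*d2 + 4*m*d1 + (-4)*m*d1*d1 + 4*m*d0 + (-8)*m*d0*d2
      + 16*m*c2 + 32*m*c1 + (-64)*m*c1*c1 + 16*m*c0 + (-32)*m*c0*c2), ?_⟩
    rw [fibPoly_two_mul_add_one' n]
    simp only [derivative_mul, derivative_add, derivative_sub, derivative_X, eval_add,
      eval_sub, eval_mul, eval_X, eval_one, one_mul, mul_one]
    rw [hA0, hA1, hA2, hB0, hB1, hB2]; ring
  · rw [Int.modEq_iff_dvd]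
    refine ⟨(d3 + (-13)*m + 4*m*d3 + 2*m*d2 + 2*m*d1 + (-4)*m*d1*d2 + (-8)*m*d0*d3
      + 16*m*c3 + 8*m*c2 + 16*m*c1 + (-32)*m*c1*c2 + 16*m*c0 + (-32)*m*c0*c3), ?_⟩
    rw [fibPoly_two_mul_add_one' n]
    simp only [derivative_mul, derivative_add, derivative_sub, derivative_X, eval_add,
      eval_sub, eval_mul, eval_X, eval_one, one_mul, mul_one]
    rw [hA0, hA1, hA2, hA3, hB0, hB1, hB2, hB3]; ring

private lemma fibInv_base (t : ℤ) : FibInv (2*t+1) 6 1 := by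
  have p0 : fibPoly 0 = 0 := rfl
  have p1 : fibPoly 1 = 1 := rfl
  have p2 : fibPoly 2 = X := by rw [show (2:ℕ) = 0+2 from rfl, fibPoly_rec', p1, p0]; ring
  have p3 : fibPoly 3 = X^2 + 1 := by
    rw [show (3:ℕ) = 1+2 from rfl, fibPoly_rec', p2, p1]; ring
  have p4 : fibPoly 4 = X^3 + 2*X := by
    rw [show (4:ℕ) = 2+2 from rfl, fibPoly_rec', p3, p2]; ring
  have p5 : fibPoly 5 = X^4 + 3*X^2 + 1 := by
    rw [show (5:ℕ) = 3+2 from rfl, fibPoly_rec', p4, p3]; ring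
  have p6 : fibPoly 6 = X^5 + 4*X^3 + 3*X := by
    rw [show (6:ℕ) = 4+2 from rfl, fibPoly_rec', p5, p4]; ring
  have p7 : fibPoly 7 = X^6 + 5*X^4 + 6*X^2 + 1 := by
    rw [show (7:ℕ) = 5+2 from rfl, fibPoly_rec', p6, p5]; ring
  obtain ⟨u, hu⟩ : Even (t * (t + 1)) := Int.even_mul_succ_self t
  refine ⟨?_, ?_, ?_, ?_, ?_, ?_, ?_, ?_⟩
  · rw [Int.modEq_iff_dvd]
    refine ⟨-(3*u + 4*u*u + t + 6*t*u + 8*t*u*u), ?_⟩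
    rw [p6]; simp
    linear_combination (-(24 + 32*u + 64*t + 64*t*u + 48*t^2 + 32*t^3)) * hu
  · rw [Int.modEq_iff_dvd]
    refine ⟨-(1 + 11*u + 20*u*u), ?_⟩
    rw [p6]; simp
    linear_combination (-(88 + 160*u + 80*t + 80*t^2)) * hu
  · rw [Int.modEq_iff_dvd]
    refine ⟨-(5 + 20*u + 11*t + 40*t*u), ?_⟩
    rw [p6]; simp
    linear_combination (-(80 + 160*t)) * hu
  · rw [Int.modEq_iff_dvd]
    refine ⟨-(3 + 20*u), ?_⟩
    rw [p6]; simp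
    linear_combination (-240 : ℤ) * hu
  · rw [Int.modEq_iff_dvd]
    refine ⟨-(1 + 19*u + 64*u*u + 64*u*u*u), ?_⟩
    rw [show (6:ℕ)+1 = 7 from rfl, p7]; simp
    linear_combination (-(76 + 256*u + 256*u^2 + 128*t + 128*t*u + 192*t^2 + 128*t^2*u
      + 128*t^3 + 64*t^4)) * hu
  · rw [Int.modEq_iff_dvd]
    refine ⟨-(9 + 64*u + 96*u*u + 19*t + 128*t*u + 192*t*u*u), ?_⟩
    rw [show (6:ℕ)+1 = 7 from rfl, p7]; simp
    linear_combination (-(128 + 192*u + 352*t + 384*t*u + 288*t^2 + 192*t^3)) * hu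
  · rw [Int.modEq_iff_dvd]
    refine ⟨-(25 + 240*u + 480*u*u), ?_⟩
    rw [show (6:ℕ)+1 = 7 from rfl, p7]; simp
    linear_combination (-(480 + 960*u + 480*t + 480*t^2)) * hu
  · rw [Int.modEq_iff_dvd]
    refine ⟨-(20 + 80*u + 40*t + 160*t*u), ?_⟩
    rw [show (6:ℕ)+1 = 7 from rfl, p7]; simp
    linear_combination (-(480 + 960*t)) * hu

private lemma fibInv_key (t : ℤ) (l : ℕ) : FibInv (2*t+1) (3 * 2^(l+1)) ((2:ℤ)^l) := by
  induction l with
  | zero => simpa using fibInv_base t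
  | succ k ih =>
      have h := fibInv_step t ((2:ℤ)^k) (3 * 2^(k+1)) ih
      have e1 : 2 * (3 * 2^(k+1)) = 3 * 2^(k+1+1) := by ring
      have e2 : (2:ℤ) * 2^k = 2^(k+1) := by ring
      rwa [e1, e2] at h

theorem fibPoly_third_deriv_eval_odd (s : ℤ) (hs : Odd s) (l : ℕ) (hl : 1 ≤ l) :
    (derivative (derivative (derivative (fibPoly (3 * 2 ^ l))))).eval s ≡ 0
      [ZMOD (2 : ℤ) ^ (l + 1)] ∧
    (derivative (derivative (derivative (fibPoly (3 * 2 ^ l + 1))))).eval s ≡ 0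
      [ZMOD (2 : ℤ) ^ (l + 1)] ∧
    (derivative (derivative (derivative (fibPoly (3 * 2 ^ l + 2))))).eval s ≡ 2 ^ l
      [ZMOD (2 : ℤ) ^ (l + 1)] := by
  obtain ⟨t, rfl⟩ := hs
  obtain ⟨l', rfl⟩ : ∃ l', l = l' + 1 := ⟨l - 1, by omega⟩
  obtain ⟨h1, h2, h3, h4, h5, h6, h7, h8⟩ := fibInv_key t l'
  obtain ⟨c3, hc3⟩ := Int.ModEq.dvd h4
  obtain ⟨d2, hd2⟩ := Int.ModEq.dvd h7
  obtain ⟨d3, hd3⟩ := Int.ModEq.dvd h8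
  set m : ℤ := (2:ℤ)^l' with hm
  have hA3 : (derivative (derivative (derivative (fibPoly (3 * 2^(l'+1)))))).eval (2*t+1)
      = 12*m - 24*m*c3 := by linarith
  have hB2 : (derivative (derivative (fibPoly (3 * 2^(l'+1) + 1)))).eval (2*t+1)
      = 2*m - 4*m*d2 := by linarith
  have hB3 : (derivative (derivative (derivative (fibPoly (3 * 2^(l'+1) + 1))))).eval (2*t+1)
      = -(12*m*d3) := by linarith
  have hpow1 : (2:ℤ)^(l'+1) = 2*m := by rw [hm, pow_succ]; ring
  have hpow2 : (2:ℤ)^(l'+1+1) = 4*m := by rw [hm, pow_succ, pow_succ]; ring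
  refine ⟨?_, ?_, ?_⟩
  · rw [Int.modEq_iff_dvd, hpow2, hA3]
    exact ⟨-3 + 6*c3, by ring⟩
  · rw [Int.modEq_iff_dvd, hpow2, hB3]
    exact ⟨3*d3, by ring⟩
  · rw [Int.modEq_iff_dvd, hpow2, hpow1, fibPoly_rec' (3 * 2^(l'+1))]
    refine ⟨-4 + 3*d2 + 6*c3 + 3*d3 + 6*t*d3, ?_⟩
    simp only [derivative_mul, derivative_add, derivative_X, eval_add, eval_mul, eval_X,
      eval_one, one_mul, mul_one]
    rw [hA3, hB2, hB3]; ring
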